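/- Let Π' = Diag(π') with all π'(k) > 0, Q' an invertible K×K matrix, and G a K×K symmetric positive definite Gram matrix with smallest eigenvalue σ_K(G). Let D₁ = (Π'Q')ᵀ G (Π'Q') and D₂ = Q'ᵀ G Q'. Then for any a = (a_1,…,a_K) ∈ H^K (H a real Hilbert space), ∑_{i,j=1}^K (D₁∘D₂)(i,j) ⟨a_i, a_j⟩ ≥ (min_k π'(k))² σ_K(Q')⁴ σ_K(G)² · ∑_{k=1}^K ‖a_k‖². -/

import Mathlib

open Matrix
open scoped RealInnerProductSpace

variable {K : ℕ}

/-- M - λ_min • 1 is PSD for a real Hermitian matrix. -/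
lemma sub_inf_smul_posSemidef [NeZero K] {M : Matrix (Fin K) (Fin K) ℝ}
    (hM : M.IsHermitian) :
    (M - (⨅ i, hM.eigenvalues i) • (1 : Matrix (Fin K) (Fin K) ℝ)).PosSemidef := by
  set c := ⨅ i, hM.eigenvalues i with hc
  set U : Matrix (Fin K) (Fin K) ℝ := (hM.eigenvectorUnitary : Matrix (Fin K) (Fin K) ℝ) with hU
  have hUU : U * star U = 1 := (Matrix.mem_unitaryGroup_iff).mp hM.eigenvectorUnitary.2
  have key : M - c • 1 = U * diagonal (fun i => hM.eigenvalues i - c) * star U := by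
    have hst := hM.spectral_theorem
    have hdiag : diagonal (fun i => hM.eigenvalues i - c)
        = diagonal (RCLike.ofReal ∘ hM.eigenvalues) - c • (1 : Matrix (Fin K) (Fin K) ℝ) := by
      rw [smul_one_eq_diagonal, ← diagonal_sub]
      rfl
    conv_lhs => rw [hst]
    rw [hdiag, Matrix.mul_sub, Matrix.sub_mul]
    congr 1
    rw [Matrix.mul_smul, Matrix.mul_one, Matrix.smul_mul, hUU]
  rw [key]
  exact (posSemidef_diagonal_iff.mpr fun i => by
    simp only [sub_nonneg, hc]
    exact ciInf_le (Set.finite_range _).bddBelow i).mul_mul_conjTranspose_same U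

open scoped MatrixOrder in
lemma psd_decomp {M : Matrix (Fin K) (Fin K) ℝ} (hM : M.PosSemidef) :
    ∃ B : Matrix (Fin K) (Fin K) ℝ, M = Bᴴ * B := by
  obtain ⟨B, hB⟩ := CStarAlgebra.nonneg_iff_eq_star_mul_self.mp hM.nonneg
  exact ⟨B, hB⟩

lemma quad_lower [NeZero K] {M : Matrix (Fin K) (Fin K) ℝ}
    (hM : M.IsHermitian) (x : Fin K → ℝ) :
    (⨅ i, hM.eigenvalues i) * (x ⬝ᵥ x) ≤ x ⬝ᵥ M *ᵥ x := by
  have h := (sub_inf_smul_posSemidef hM).dotProduct_mulVec_nonneg x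
  simp only [star_trivial, sub_mulVec, smul_mulVec, one_mulVec, dotProduct_sub,
    dotProduct_smul, smul_eq_mul] at h
  linarith

/-- Hilbert-valued quadratic form of a PSD matrix is nonneg. -/
lemma psd_inner_nonneg {H : Type*} [NormedAddCommGroup H] [InnerProductSpace ℝ H]
    {M : Matrix (Fin K) (Fin K) ℝ} (hM : M.PosSemidef) (a : Fin K → H) :
    0 ≤ ∑ i, ∑ j, M i j * ⟪a i, a j⟫ := by
  obtain ⟨B, rfl⟩ := psd_decomp hM
  have key : ∀ k, ‖∑ i, B k i • a i‖ ^ 2 = ∑ i, ∑ j, B k i * B k j * ⟪a i, a j⟫ := by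
    intro k
    rw [← real_inner_self_eq_norm_sq, sum_inner]
    refine Finset.sum_congr rfl fun i _ => ?_
    rw [real_inner_smul_left, inner_sum, Finset.mul_sum]
    refine Finset.sum_congr rfl fun j _ => ?_
    rw [real_inner_smul_right]
    ring
  have h2 : ∑ i, ∑ j, (Bᴴ * B) i j * ⟪a i, a j⟫ = ∑ k, ‖∑ i, B k i • a i‖ ^ 2 := by
    simp only [key, Matrix.mul_apply, conjTranspose_apply, star_trivial, Finset.sum_mul]
    calc ∑ i, ∑ j, ∑ k, B k i * B k j * ⟪a i, a j⟫
        = ∑ i, ∑ k, ∑ j, B k i * B k j * ⟪a i, a j⟫ :=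
          Finset.sum_congr rfl fun i _ => Finset.sum_comm
      _ = ∑ k, ∑ i, ∑ j, B k i * B k j * ⟪a i, a j⟫ := Finset.sum_comm
  rw [h2]
  positivity

lemma inner_lower [NeZero K] {H : Type*} [NormedAddCommGroup H] [InnerProductSpace ℝ H]
    {M : Matrix (Fin K) (Fin K) ℝ} {c : ℝ}
    (hM : (M - c • (1 : Matrix (Fin K) (Fin K) ℝ)).PosSemidef) (a : Fin K → H) :
    c * ∑ k, ‖a k‖ ^ 2 ≤ ∑ i, ∑ j, M i j * ⟪a i, a j⟫ := by
  have h := psd_inner_nonneg hM a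
  have hexp : ∑ i, ∑ j, (M - c • (1 : Matrix (Fin K) (Fin K) ℝ)) i j * ⟪a i, a j⟫
      = ∑ i, ∑ j, M i j * ⟪a i, a j⟫ - c * ∑ k, ‖a k‖ ^ 2 := by
    simp only [Matrix.sub_apply, Matrix.smul_apply, Matrix.one_apply, smul_eq_mul, sub_mul,
      Finset.sum_sub_distrib, mul_ite, mul_one, mul_zero, ite_mul, zero_mul]
    rw [Finset.mul_sum]
    congr 1
    refine Finset.sum_congr rfl fun i _ => ?_
    rw [Finset.sum_ite_eq Finset.univ i fun j => c * ⟪a i, a j⟫]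
    simp [real_inner_self_eq_norm_sq]
  rw [hexp] at h
  linarith

lemma dot_transpose_mul_mul (Rm G : Matrix (Fin K) (Fin K) ℝ) (x : Fin K → ℝ) :
    x ⬝ᵥ (Rmᵀ * G * Rm) *ᵥ x = (Rm *ᵥ x) ⬝ᵥ G *ᵥ (Rm *ᵥ x) := by
  rw [← mulVec_mulVec, ← mulVec_mulVec, dotProduct_mulVec x, vecMul_transpose]

/-- Sandwich bound: `RᵀGR ⪰ σ_K(G)·γ·I` whenever `‖Rx‖² ≥ γ‖x‖²`. -/
lemma sandwich_psd [NeZero K] {G : Matrix (Fin K) (Fin K) ℝ} (hG : G.PosDef)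
    (Rm : Matrix (Fin K) (Fin K) ℝ) {γ : ℝ} (_hγ : 0 ≤ γ)
    (hR : ∀ x : Fin K → ℝ, γ * (x ⬝ᵥ x) ≤ (Rm *ᵥ x) ⬝ᵥ (Rm *ᵥ x)) :
    (Rmᵀ * G * Rm - ((⨅ i, hG.1.eigenvalues i) * γ) • (1 : Matrix (Fin K) (Fin K) ℝ)).PosSemidef := by
  have hc3 : 0 ≤ ⨅ i, hG.1.eigenvalues i := le_ciInf fun i => (hG.eigenvalues_pos i).le
  refine PosSemidef.of_dotProduct_mulVec_nonneg ?_ ?_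
  · have h1 : (Rmᵀ * G * Rm).IsHermitian := by
      have := (Matrix.isHermitian_conjTranspose_mul_mul Rm hG.1)
      rwa [conjTranspose_eq_transpose_of_trivial] at this
    have h2 : (((⨅ i, hG.1.eigenvalues i) * γ) • (1 : Matrix (Fin K) (Fin K) ℝ)).IsHermitian := by
      simp [Matrix.IsHermitian]
    exact h1.sub h2
  · intro x
    have e1 := dot_transpose_mul_mul Rm G x
    have e2 := quad_lower hG.1 (Rm *ᵥ x)
    have e3 := hR x
    have hxx : (0:ℝ) ≤ x ⬝ᵥ x := by
      simpa [dotProduct] using Finset.sum_nonneg fun i _ => mul_self_nonneg (x i)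
    simp only [star_trivial, sub_mulVec, smul_mulVec, one_mulVec, dotProduct_sub,
      dotProduct_smul, smul_eq_mul, sub_nonneg, e1]
    calc (⨅ i, hG.1.eigenvalues i) * γ * (x ⬝ᵥ x)
        ≤ (⨅ i, hG.1.eigenvalues i) * ((Rm *ᵥ x) ⬝ᵥ (Rm *ᵥ x)) := by
          rw [mul_assoc]; exact mul_le_mul_of_nonneg_left e3 hc3
      _ ≤ (Rm *ᵥ x) ⬝ᵥ G *ᵥ (Rm *ᵥ x) := e2

/-- Key inequality of the orthogonal-part step in the proof of Theorem 7:
for `D₁ = (Π'Q')ᵀ G (Π'Q')` and `D₂ = Q'ᵀ G Q'`,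
`∑_{i,j} (D₁∘D₂)(i,j) ⟨a_i,a_j⟩ ≥ (min_k π'(k))² σ_K(Q')⁴ σ_K(G)² ∑_k ‖a_k‖²`,
where `σ_K(Q')⁴` is the square of the smallest eigenvalue of `Q'ᵀQ'`. -/
theorem stmt8 {K : ℕ} (hK : 0 < K) {H : Type*} [NormedAddCommGroup H]
    [InnerProductSpace ℝ H]
    (π' : Fin K → ℝ) (hπ' : ∀ k, 0 < π' k)
    (Q' G : Matrix (Fin K) (Fin K) ℝ) (hQ'inv : IsUnit Q'.det)
    (hG : G.PosDef) (hQQ : (Q'ᵀ * Q').IsHermitian)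
    (a : Fin K → H) :
    (⨅ k, π' k) ^ 2 * (⨅ i, hQQ.eigenvalues i) ^ 2 * (⨅ i, hG.1.eigenvalues i) ^ 2 *
        ∑ k, ‖a k‖ ^ 2 ≤
      ∑ i, ∑ j, (((Matrix.diagonal π' * Q')ᵀ * G * (Matrix.diagonal π' * Q')) i j *
        ((Q'ᵀ * G * Q') i j)) * ⟪a i, a j⟫ := by

  haveI : NeZero K := ⟨hK.ne'⟩
  set m := ⨅ k, π' k with hm
  set c2 := ⨅ i, hQQ.eigenvalues i with hc2def
  set c3 := ⨅ i, hG.1.eigenvalues i with hc3def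
  set P := Matrix.diagonal π' * Q' with hP
  have hm0 : 0 ≤ m := le_ciInf fun i => (hπ' i).le
  -- Q'ᵀQ' is positive definite
  have hQinj : Function.Injective Q'.mulVec :=
    mulVec_injective_iff_isUnit.mpr ((isUnit_iff_isUnit_det Q').mpr hQ'inv)
  have hdotnn : ∀ y : Fin K → ℝ, (0:ℝ) ≤ y ⬝ᵥ y := fun y =>
    Finset.sum_nonneg fun i _ => mul_self_nonneg (y i)
  have hQQpd : (Q'ᵀ * Q').PosDef := by
    refine PosDef.of_dotProduct_mulVec_pos hQQ fun x hx => ?_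
    have e1 : x ⬝ᵥ (Q'ᵀ * Q') *ᵥ x = (Q' *ᵥ x) ⬝ᵥ (Q' *ᵥ x) := by
      rw [← mulVec_mulVec, dotProduct_mulVec x, vecMul_transpose]
    have hy : Q' *ᵥ x ≠ 0 := fun h => hx (hQinj (by rw [h, mulVec_zero]))
    obtain ⟨i, hi⟩ := Function.ne_iff.mp hy
    have hi' : (Q' *ᵥ x) i ≠ 0 := by simpa using hi
    have hpos : (0:ℝ) < (Q' *ᵥ x) ⬝ᵥ (Q' *ᵥ x) :=
      Finset.sum_pos' (fun j _ => mul_self_nonneg _)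
        ⟨i, Finset.mem_univ i, mul_self_pos.mpr hi'⟩
    simpa only [star_trivial, e1] using hpos
  have hc2 : 0 ≤ c2 := le_ciInf fun i => (hQQpd.eigenvalues_pos i).le
  have hc3 : 0 ≤ c3 := le_ciInf fun i => (hG.eigenvalues_pos i).le
  -- quadratic lower bound for Q'ᵀQ'
  have hQq : ∀ x : Fin K → ℝ, c2 * (x ⬝ᵥ x) ≤ (Q' *ᵥ x) ⬝ᵥ (Q' *ᵥ x) := by
    intro x
    have := quad_lower hQQ x
    rwa [← mulVec_mulVec, dotProduct_mulVec x, vecMul_transpose] at this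
  -- ‖P x‖² ≥ m² c2 ‖x‖²
  have hPq : ∀ x : Fin K → ℝ, (m ^ 2 * c2) * (x ⬝ᵥ x) ≤ (P *ᵥ x) ⬝ᵥ (P *ᵥ x) := by
    intro x
    have hPx : P *ᵥ x = Matrix.diagonal π' *ᵥ (Q' *ᵥ x) := by rw [hP, mulVec_mulVec]
    set y := Q' *ᵥ x with hy
    have e2 : (P *ᵥ x) ⬝ᵥ (P *ᵥ x) = ∑ i, (π' i * y i) * (π' i * y i) := by
      simp [hPx, dotProduct, mulVec_diagonal]
    have e3 : m ^ 2 * (y ⬝ᵥ y) ≤ ∑ i, (π' i * y i) * (π' i * y i) := by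
      rw [dotProduct, Finset.mul_sum]
      refine Finset.sum_le_sum fun i _ => ?_
      have hmi : m ≤ π' i := ciInf_le (Set.finite_range _).bddBelow i
      have : m ^ 2 ≤ π' i ^ 2 := pow_le_pow_left₀ hm0 hmi 2
      nlinarith [mul_self_nonneg (y i)]
    have e4 : c2 * (x ⬝ᵥ x) ≤ y ⬝ᵥ y := hQq x
    rw [e2]
    calc m ^ 2 * c2 * (x ⬝ᵥ x) = m ^ 2 * (c2 * (x ⬝ᵥ x)) := by ring
      _ ≤ m ^ 2 * (y ⬝ᵥ y) := mul_le_mul_of_nonneg_left e4 (by positivity)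
      _ ≤ _ := e3
  -- PSD lower bounds for the two sandwiched matrices
  have hD1 : (Pᵀ * G * P - (c3 * (m ^ 2 * c2)) • (1 : Matrix (Fin K) (Fin K) ℝ)).PosSemidef :=
    sandwich_psd hG P (by positivity) hPq
  have hD2 : (Q'ᵀ * G * Q' - (c3 * c2) • (1 : Matrix (Fin K) (Fin K) ℝ)).PosSemidef :=
    sandwich_psd hG Q' hc2 hQq
  -- diagonal entries of D₂ are ≥ c3 * c2
  have hdiag : ∀ i, c3 * c2 ≤ (Q'ᵀ * G * Q') i i := by
    intro i
    have h := hD2.dotProduct_mulVec_nonneg (Pi.single i 1)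
    have e : ∀ M : Matrix (Fin K) (Fin K) ℝ, (Pi.single i 1 : Fin K → ℝ) ⬝ᵥ M *ᵥ Pi.single i 1
        = M i i := by
      intro M
      rw [mulVec_single, single_dotProduct]
      simp
    simp only [star_trivial, sub_mulVec, smul_mulVec, one_mulVec, dotProduct_sub,
      dotProduct_smul, smul_eq_mul, sub_nonneg, e] at h
    have e2 : (Pi.single i 1 : Fin K → ℝ) ⬝ᵥ Pi.single i 1 = 1 := by
      rw [single_dotProduct]; simp
    rw [e2, mul_one] at h
    exact h
  -- decompose D₂ = Bᵀ B
  have hD2psd : (Q'ᵀ * G * Q').PosSemidef := by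
    have := hG.posSemidef.conjTranspose_mul_mul_same Q'
    rwa [conjTranspose_eq_transpose_of_trivial] at this
  obtain ⟨B, hB⟩ := psd_decomp hD2psd
  have hD2entry : ∀ i j, (Q'ᵀ * G * Q') i j = ∑ k, B k i * B k j := by
    intro i j
    rw [hB]
    simp [Matrix.mul_apply]
  -- main chain
  have step1 : ∀ k, (c3 * (m ^ 2 * c2)) * ∑ i, ‖B k i • a i‖ ^ 2
      ≤ ∑ i, ∑ j, (Pᵀ * G * P) i j * ⟪B k i • a i, B k j • a j⟫ :=
    fun k => inner_lower hD1 _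
  have sum1 : (c3 * (m ^ 2 * c2)) * ∑ k, ∑ i, ‖B k i • a i‖ ^ 2
      ≤ ∑ k, ∑ i, ∑ j, (Pᵀ * G * P) i j * ⟪B k i • a i, B k j • a j⟫ := by
    rw [Finset.mul_sum]
    exact Finset.sum_le_sum fun k _ => step1 k
  have rhs_eq : ∑ i, ∑ j, ((Pᵀ * G * P) i j * ((Q'ᵀ * G * Q') i j)) * ⟪a i, a j⟫
      = ∑ k, ∑ i, ∑ j, (Pᵀ * G * P) i j * ⟪B k i • a i, B k j • a j⟫ := by
    calc ∑ i, ∑ j, ((Pᵀ * G * P) i j * ((Q'ᵀ * G * Q') i j)) * ⟪a i, a j⟫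
        = ∑ i, ∑ j, ∑ k, (Pᵀ * G * P) i j * (B k i * B k j * ⟪a i, a j⟫) := by
          refine Finset.sum_congr rfl fun i _ => Finset.sum_congr rfl fun j _ => ?_
          rw [hD2entry, Finset.mul_sum, Finset.sum_mul]
          exact Finset.sum_congr rfl fun k _ => by ring
      _ = ∑ i, ∑ k, ∑ j, (Pᵀ * G * P) i j * (B k i * B k j * ⟪a i, a j⟫) :=
          Finset.sum_congr rfl fun i _ => Finset.sum_comm
      _ = ∑ k, ∑ i, ∑ j, (Pᵀ * G * P) i j * (B k i * B k j * ⟪a i, a j⟫) := Finset.sum_comm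
      _ = ∑ k, ∑ i, ∑ j, (Pᵀ * G * P) i j * ⟪B k i • a i, B k j • a j⟫ := by
          refine Finset.sum_congr rfl fun k _ => Finset.sum_congr rfl fun i _ =>
            Finset.sum_congr rfl fun j _ => ?_
          rw [real_inner_smul_left, real_inner_smul_right]
          ring
  have norm_eq : ∑ k, ∑ i, ‖B k i • a i‖ ^ 2 = ∑ i, (∑ k, B k i * B k i) * ‖a i‖ ^ 2 := by
    rw [Finset.sum_comm]
    refine Finset.sum_congr rfl fun i _ => ?_
    rw [Finset.sum_mul]
    refine Finset.sum_congr rfl fun k _ => ?_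
    rw [norm_smul, mul_pow]
    simp [sq_abs, pow_two]
  have low : (c3 * c2) * ∑ k, ‖a k‖ ^ 2 ≤ ∑ k, ∑ i, ‖B k i • a i‖ ^ 2 := by
    rw [norm_eq, Finset.mul_sum]
    refine Finset.sum_le_sum fun i _ => ?_
    have h1 : c3 * c2 ≤ ∑ k, B k i * B k i := by
      rw [← hD2entry i i]; exact hdiag i
    exact mul_le_mul_of_nonneg_right h1 (by positivity)
  calc m ^ 2 * c2 ^ 2 * c3 ^ 2 * ∑ k, ‖a k‖ ^ 2
      = (c3 * (m ^ 2 * c2)) * ((c3 * c2) * ∑ k, ‖a k‖ ^ 2) := by ring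
    _ ≤ (c3 * (m ^ 2 * c2)) * ∑ k, ∑ i, ‖B k i • a i‖ ^ 2 :=
        mul_le_mul_of_nonneg_left low (by positivity)
    _ ≤ ∑ k, ∑ i, ∑ j, (Pᵀ * G * P) i j * ⟪B k i • a i, B k j • a j⟫ := sum1
    _ = ∑ i, ∑ j, ((Pᵀ * G * P) i j * ((Q'ᵀ * G * Q') i j)) * ⟪a i, a j⟫ := rhs_eq.symm
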